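/- Let f = χ_Ω with ∂Ω contained in the zero set of a trigonometric polynomial μ with Fourier coefficients c[k], k ∈ Λ. Then for any first-order constant-coefficient differential operator D (a linear combination of ∂ₓ and ∂_y), the Fourier transform of Df satisfies the annihilation relation Σ_{k∈Λ} c[k] · (Df)^(ω − 2πk) = 0 for all ω ∈ ℝ². -/

import Mathlib

open MeasureTheory

/-- A trigonometric polynomial, represented by its finitely supported Fourier
coefficients `c : ℤ² →₀ ℂ`; multiplication is convolution of coefficients. -/
noncomputable def trigEval (μ : AddMonoidAlgebra ℂ (ℤ × ℤ)) (r : ℝ × ℝ) : ℂ :=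
  ∑ k ∈ μ.coeff.support, μ.coeff k * Complex.exp (2 * Real.pi * Complex.I * (k.1 * r.1 + k.2 * r.2))

/-- The degree `(K, L)` of a trigonometric polynomial: the dimensions of the smallest
rectangle containing the frequency support. -/
noncomputable def tdeg (μ : AddMonoidAlgebra ℂ (ℤ × ℤ)) : ℤ × ℤ :=
  (((μ.coeff.support.image Prod.fst).max.unbotD 0) - ((μ.coeff.support.image Prod.fst).min.untopD 0) + 1,
   ((μ.coeff.support.image Prod.snd).max.unbotD 0) - ((μ.coeff.support.image Prod.snd).min.untopD 0) + 1)

/-- The zero set of a trigonometric polynomial within the unit square `[0,1]²`. -/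
def zeroSet (μ : AddMonoidAlgebra ℂ (ℤ × ℤ)) : Set (ℝ × ℝ) :=
  {r | r ∈ Set.Icc ((0:ℝ), (0:ℝ)) (1, 1) ∧ trigEval μ r = 0}

/-- A simply connected region `Ω ⊆ [0,1]²` whose boundary `∂Ω = frontier Ω` is a
piecewise smooth (piecewise C¹) simple closed curve. -/
def IsPSRegion (Ω : Set (ℝ × ℝ)) : Prop :=
  IsOpen Ω ∧ Ω ⊆ Set.Icc ((0:ℝ), (0:ℝ)) (1, 1) ∧ SimplyConnectedSpace ↥Ω ∧
  ∃ γ : ℝ → ℝ × ℝ, ContinuousOn γ (Set.Icc 0 1) ∧ γ 0 = γ 1 ∧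
    Set.InjOn γ (Set.Ico 0 1) ∧ frontier Ω = γ '' Set.Icc 0 1 ∧
    ∃ S : Finset ℝ, ∀ t ∈ Set.Icc (0:ℝ) 1 \ (S : Set ℝ), DifferentiableAt ℝ γ t

/-- The (distributional) Fourier transform of `Df`, where `f = χ_Ω` and `D = a∂ₓ + b∂_y`:
`(Df)^(ω) = i(aω₁ + bω₂) ∫_Ω e^{-i⟨ω,r⟩} dr`. -/
noncomputable def hatDchi (a b : ℂ) (Ω : Set (ℝ × ℝ)) (ω : ℝ × ℝ) : ℂ :=
  Complex.I * (a * ω.1 + b * ω.2) *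
    ∫ r in Ω, Complex.exp (-Complex.I * (ω.1 * r.1 + ω.2 * r.2))


private lemma exists_Ioo_component {U : Set ℝ} (hU : IsOpen U) (hb : Bornology.IsBounded U)
    {x : ℝ} (hx : x ∈ U) :
    ∃ p q : ℝ, p < q ∧ connectedComponentIn U x = Set.Ioo p q ∧
      p ∈ frontier U ∧ q ∈ frontier U := by
  set s := connectedComponentIn U x with hs
  have hso : IsOpen s := hU.connectedComponentIn
  have hsc : IsPreconnected s := isPreconnected_connectedComponentIn
  have hsx : x ∈ s := mem_connectedComponentIn hx
  have hsU : s ⊆ U := connectedComponentIn_subset U x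
  have hsb : Bornology.IsBounded s := hb.subset hsU
  have hbd : BddBelow s := hsb.bddBelow
  have hba : BddAbove s := hsb.bddAbove
  set p := sInf s with hp
  set q := sSup s with hq
  have hps : p ∉ s := by
    intro hmem
    obtain ⟨ε, hε, hball⟩ := Metric.isOpen_iff.1 hso p hmem
    have h2 : p - ε / 2 ∈ s := by
      apply hball
      rw [Metric.mem_ball, Real.dist_eq]
      have : p - ε / 2 - p = -(ε / 2) := by ring
      rw [this, abs_neg, abs_of_pos (by linarith)]
      linarith
    have := csInf_le hbd h2
    simp only [← hp] at this
    linarith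
  have hqs : q ∉ s := by
    intro hmem
    obtain ⟨ε, hε, hball⟩ := Metric.isOpen_iff.1 hso q hmem
    have h2 : q + ε / 2 ∈ s := by
      apply hball
      rw [Metric.mem_ball, Real.dist_eq]
      have : q + ε / 2 - q = ε / 2 := by ring
      rw [this, abs_of_pos (by linarith)]
      linarith
    have := le_csSup hba h2
    simp only [← hq] at this
    linarith
  have hxp : p < x := lt_of_le_of_ne (csInf_le hbd hsx) fun h => hps (by rw [h]; exact hsx)
  have hxq : x < q := lt_of_le_of_ne (le_csSup hba hsx) fun h => hqs (by rw [← h]; exact hsx)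
  have hpq : p < q := hxp.trans hxq
  have hIoo : s = Set.Ioo p q := by
    apply Set.Subset.antisymm
    · intro z hz
      have h1 : z ∈ Set.Icc p q := subset_Icc_csInf_csSup hbd hba hz
      exact ⟨lt_of_le_of_ne h1.1 fun h => hps (by rw [h]; exact hz),
        lt_of_le_of_ne h1.2 fun h => hqs (by rw [← h]; exact hz)⟩
    · exact IsConnected.Ioo_csInf_csSup_subset ⟨⟨x, hsx⟩, hsc⟩ hbd hba
  have hpf : p ∈ frontier U := by
    rw [hU.frontier_eq]
    refine ⟨closure_mono hsU (csInf_mem_closure ⟨x, hsx⟩ hbd), ?_⟩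
    intro hpU
    obtain ⟨ε, hε, hball⟩ := Metric.isOpen_iff.1 hU p hpU
    have ht : Set.Ioo (p - ε / 2) q ⊆ U := by
      intro z hz
      rcases le_or_gt z p with h | h
      · apply hball
        rw [Metric.mem_ball, Real.dist_eq, abs_of_nonpos (by linarith)]
        have := hz.1
        linarith
      · exact hsU (hIoo ▸ (⟨h, hz.2⟩ : z ∈ Set.Ioo p q))
    have hsub2 : Set.Ioo (p - ε / 2) q ⊆ s :=
      isPreconnected_Ioo.subset_connectedComponentIn ⟨by linarith, hxq⟩ ht
    have : p ∈ s := hsub2 ⟨by linarith, hpq⟩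
    rw [hIoo] at this
    exact lt_irrefl p this.1
  have hqf : q ∈ frontier U := by
    rw [hU.frontier_eq]
    refine ⟨closure_mono hsU (csSup_mem_closure ⟨x, hsx⟩ hba), ?_⟩
    intro hqU
    obtain ⟨ε, hε, hball⟩ := Metric.isOpen_iff.1 hU q hqU
    have ht : Set.Ioo p (q + ε / 2) ⊆ U := by
      intro z hz
      rcases lt_or_ge z q with h | h
      · exact hsU (hIoo ▸ (⟨hz.1, h⟩ : z ∈ Set.Ioo p q))
      · apply hball
        rw [Metric.mem_ball, Real.dist_eq, abs_of_nonneg (by linarith)]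
        have := hz.2
        linarith
    have hsub2 : Set.Ioo p (q + ε / 2) ⊆ s :=
      isPreconnected_Ioo.subset_connectedComponentIn ⟨hxp, by linarith⟩ ht
    have : q ∈ s := hsub2 ⟨hpq, by linarith⟩
    rw [hIoo] at this
    exact lt_irrefl q this.2
  exact ⟨p, q, hpq, hIoo, hpf, hqf⟩


private lemma integral_deriv_eq_zero_of_frontier {U : Set ℝ} (hU : IsOpen U)
    (hb : Bornology.IsBounded U) {φ φ' : ℝ → ℂ}
    (hd : ∀ x, HasDerivAt φ (φ' x) x) (hc : Continuous φ')
    (h0 : ∀ x ∈ frontier U, φ x = 0) : ∫ x in U, φ' x = 0 := by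
  obtain ⟨R, hR⟩ := hb.subset_closedBall 0
  have hint : IntegrableOn φ' U := by
    have h1 : IntegrableOn φ' (Metric.closedBall (0 : ℝ) R) := by
      rw [Real.closedBall_eq_Icc]
      exact hc.continuousOn.integrableOn_compact isCompact_Icc
    exact h1.mono_set hR
  set C : Set (Set ℝ) := (fun x => connectedComponentIn U x) '' U with hC
  have hop : ∀ s ∈ C, IsOpen s := by rintro s ⟨x, hx, rfl⟩; exact hU.connectedComponentIn
  have hne : ∀ s ∈ C, s.Nonempty := by
    rintro s ⟨x, hx, rfl⟩; exact ⟨x, mem_connectedComponentIn hx⟩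
  have hdisj : C.PairwiseDisjoint id := by
    rintro s ⟨x, hx, rfl⟩ t ⟨y, hy, rfl⟩ hst
    refine Set.disjoint_left.2 fun z hzs hzt => hst ?_
    simp only [id] at hzs hzt
    show connectedComponentIn U x = connectedComponentIn U y
    rw [connectedComponentIn_eq hzs, connectedComponentIn_eq hzt]
  have hcount : C.Countable := hdisj.countable_of_isOpen hop hne
  haveI := hcount.to_subtype
  have hUeq : ⋃ s : C, (s : Set ℝ) = U := by
    apply Set.Subset.antisymm
    · rintro z hz
      obtain ⟨si, hzs⟩ := Set.mem_iUnion.1 hz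
      obtain ⟨x, hx, hxeq⟩ := si.2
      rw [← hxeq] at hzs
      exact connectedComponentIn_subset U x hzs
    · intro z hz
      exact Set.mem_iUnion.2 ⟨⟨_, ⟨z, hz, rfl⟩⟩, mem_connectedComponentIn hz⟩
  have hmeas : ∀ s : C, MeasurableSet (s : Set ℝ) := fun s => (hop s s.2).measurableSet
  have hpair : Pairwise (Function.onFun Disjoint fun s : C => (s : Set ℝ)) := fun i j hij =>
    hdisj i.2 j.2 fun h => hij (Subtype.ext h)
  rw [← hUeq, integral_iUnion hmeas hpair (hUeq ▸ hint)]
  have hzero : ∀ s : C, ∫ x in (s : Set ℝ), φ' x = 0 := by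
    rintro ⟨s, y, hy, rfl⟩
    obtain ⟨p, q, hpq, heq, hpf, hqf⟩ := exists_Ioo_component hU hb hy
    show ∫ x in connectedComponentIn U y, φ' x = 0
    rw [heq, ← integral_Ioc_eq_integral_Ioo, ← intervalIntegral.integral_of_le hpq.le,
      intervalIntegral.integral_eq_sub_of_hasDerivAt (fun x _ => hd x)
        (hc.intervalIntegrable p q), h0 p hpf, h0 q hqf, sub_zero]
  simp only [hzero, tsum_zero]


private lemma slice_integral_zero
    {Ω : Set (ℝ × ℝ)} (hop : IsOpen Ω) (hsub : Ω ⊆ Set.Icc ((0:ℝ), (0:ℝ)) (1, 1))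
    {g gx gy : ℝ × ℝ → ℂ}
    (hdx : ∀ y x, HasDerivAt (fun t => g (t, y)) (gx (x, y)) x)
    (hdy : ∀ x y, HasDerivAt (fun t => g (x, t)) (gy (x, y)) y)
    (hcx : Continuous gx) (hcy : Continuous gy)
    (h0 : ∀ r ∈ frontier Ω, g r = 0) :
    (∫ r in Ω, gx r) = 0 ∧ (∫ r in Ω, gy r) = 0 := by
  have hm : MeasurableSet Ω := hop.measurableSet
  have hIx : IntegrableOn gx Ω :=
    (hcx.continuousOn.integrableOn_compact isCompact_Icc).mono_set hsub
  have hIy : IntegrableOn gy Ω :=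
    (hcy.continuousOn.integrableOn_compact isCompact_Icc).mono_set hsub
  constructor
  · have h2 : Integrable (Ω.indicator gx) := (integrable_indicator_iff hm).2 hIx
    rw [← integral_indicator hm]
    rw [MeasureTheory.Measure.volume_eq_prod] at h2 ⊢
    rw [MeasureTheory.integral_prod_symm _ h2]
    have hinner : ∀ y : ℝ, (∫ x : ℝ, Ω.indicator gx (x, y)) = 0 := by
      intro y
      set U : Set ℝ := {x : ℝ | (x, y) ∈ Ω} with hU
      have hcont : Continuous fun t : ℝ => ((t, y) : ℝ × ℝ) :=
        continuous_id.prodMk continuous_const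
      have hUo : IsOpen U := hop.preimage hcont
      have hUb : Bornology.IsBounded U := by
        apply (Metric.isBounded_Icc (0 : ℝ) 1).subset
        intro x hx
        exact ⟨(hsub hx).1.1, (hsub hx).2.1⟩
      have hfr : ∀ x ∈ frontier U, (fun t => g (t, y)) x = 0 := by
        intro x hx
        rw [hUo.frontier_eq] at hx
        apply h0
        rw [hop.frontier_eq]
        exact ⟨hcont.closure_preimage_subset Ω hx.1, hx.2⟩
      have hz := integral_deriv_eq_zero_of_frontier hUo hUb (hdx y)
        (hcx.comp hcont) hfr
      calc (∫ x : ℝ, Ω.indicator gx (x, y))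
          = ∫ x : ℝ, U.indicator (fun x => gx (x, y)) x := by
            rfl
        _ = ∫ x in U, gx (x, y) := integral_indicator hUo.measurableSet
        _ = 0 := hz
    simp only [hinner, integral_zero]
  · have h2 : Integrable (Ω.indicator gy) := (integrable_indicator_iff hm).2 hIy
    rw [← integral_indicator hm]
    rw [MeasureTheory.Measure.volume_eq_prod] at h2 ⊢
    rw [MeasureTheory.integral_prod _ h2]
    have hinner : ∀ x : ℝ, (∫ y : ℝ, Ω.indicator gy (x, y)) = 0 := by
      intro x
      set U : Set ℝ := {t : ℝ | (x, t) ∈ Ω} with hU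
      have hcont : Continuous fun t : ℝ => ((x, t) : ℝ × ℝ) :=
        continuous_const.prodMk continuous_id
      have hUo : IsOpen U := hop.preimage hcont
      have hUb : Bornology.IsBounded U := by
        apply (Metric.isBounded_Icc (0 : ℝ) 1).subset
        intro t ht
        exact ⟨(hsub ht).1.2, (hsub ht).2.2⟩
      have hfr : ∀ t ∈ frontier U, (fun t => g (x, t)) t = 0 := by
        intro t ht
        rw [hUo.frontier_eq] at ht
        apply h0
        rw [hop.frontier_eq]
        exact ⟨hcont.closure_preimage_subset Ω ht.1, ht.2⟩
      have hz := integral_deriv_eq_zero_of_frontier hUo hUb (hdy x)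
        (hcy.comp hcont) hfr
      calc (∫ y : ℝ, Ω.indicator gy (x, y))
          = ∫ y : ℝ, U.indicator (fun y => gy (x, y)) y := by
            rfl
        _ = ∫ y in U, gy (x, y) := integral_indicator hUo.measurableSet
        _ = 0 := hz
    simp only [hinner, integral_zero]

private lemma hasDerivAt_exp_lin (c d w : ℂ) (x : ℝ) :
    HasDerivAt (fun t : ℝ => w * Complex.exp (c * t + d))
      (w * c * Complex.exp (c * x + d)) x := by
  have h0 : HasDerivAt (fun t : ℝ => (t : ℂ)) 1 x := by
    simpa using (hasDerivAt_id x).ofReal_comp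
  have h1 : HasDerivAt (fun t : ℝ => c * (t : ℂ) + d) c x := by
    simpa using (h0.const_mul c).add_const d
  have h2 := h1.cexp.const_mul w
  rw [show w * c * Complex.exp (c * x + d) = w * (Complex.exp (c * x + d) * c) by ring]
  exact h2

private lemma annihilation_core {Ω : Set (ℝ × ℝ)} (hop : IsOpen Ω)
    (hsub : Ω ⊆ Set.Icc ((0:ℝ), (0:ℝ)) (1, 1))
    {ι : Type*} (s : Finset ι) (w : ι → ℂ) (c1 c2 : ι → ℂ) (a b : ℂ)
    (h0 : ∀ r ∈ frontier Ω,
      ∑ k ∈ s, w k * Complex.exp (c1 k * r.1 + c2 k * r.2) = 0) :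
    ∑ k ∈ s, w k * (a * c1 k + b * c2 k) *
      (∫ r in Ω, Complex.exp (c1 k * r.1 + c2 k * r.2)) = 0 := by
  classical
  have hec : ∀ k, Continuous fun r : ℝ × ℝ => Complex.exp (c1 k * r.1 + c2 k * r.2) := by
    intro k
    apply Complex.continuous_exp.comp
    fun_prop
  have hei : ∀ k, IntegrableOn (fun r : ℝ × ℝ => Complex.exp (c1 k * r.1 + c2 k * r.2)) Ω :=
    fun k => ((hec k).continuousOn.integrableOn_compact isCompact_Icc).mono_set hsub
  have hdx : ∀ y x : ℝ, HasDerivAt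
      (fun t : ℝ => ∑ k ∈ s, w k * Complex.exp (c1 k * ((t, y) : ℝ × ℝ).1 + c2 k * ((t, y) : ℝ × ℝ).2))
      (∑ k ∈ s, w k * c1 k * Complex.exp (c1 k * ((x, y) : ℝ × ℝ).1 + c2 k * ((x, y) : ℝ × ℝ).2)) x := by
    intro y x
    apply HasDerivAt.fun_sum
    intro k hk
    simpa using hasDerivAt_exp_lin (c1 k) (c2 k * (y : ℂ)) (w k) x
  have hdy : ∀ x y : ℝ, HasDerivAt
      (fun t : ℝ => ∑ k ∈ s, w k * Complex.exp (c1 k * ((x, t) : ℝ × ℝ).1 + c2 k * ((x, t) : ℝ × ℝ).2))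
      (∑ k ∈ s, w k * c2 k * Complex.exp (c1 k * ((x, y) : ℝ × ℝ).1 + c2 k * ((x, y) : ℝ × ℝ).2)) y := by
    intro x y
    apply HasDerivAt.fun_sum
    intro k hk
    have h1 := hasDerivAt_exp_lin (c2 k) (c1 k * (x : ℂ)) (w k) y
    have h2 : (fun t : ℝ => w k * Complex.exp (c2 k * t + c1 k * x))
        = fun t : ℝ => w k * Complex.exp (c1 k * (x : ℂ) + c2 k * t) := by
      funext t; rw [add_comm]
    rw [h2] at h1
    simpa [add_comm] using h1
  have hcx : Continuous fun r : ℝ × ℝ =>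
      ∑ k ∈ s, w k * c1 k * Complex.exp (c1 k * r.1 + c2 k * r.2) :=
    continuous_finset_sum _ fun k _ => (continuous_const.mul (hec k))
  have hcy : Continuous fun r : ℝ × ℝ =>
      ∑ k ∈ s, w k * c2 k * Complex.exp (c1 k * r.1 + c2 k * r.2) :=
    continuous_finset_sum _ fun k _ => (continuous_const.mul (hec k))
  obtain ⟨Ix, Iy⟩ := slice_integral_zero hop hsub hdx hdy hcx hcy h0
  rw [MeasureTheory.integral_finset_sum _ (fun k _ => (hei k).const_mul (w k * c1 k))] at Ix
  rw [MeasureTheory.integral_finset_sum _ (fun k _ => (hei k).const_mul (w k * c2 k))] at Iy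
  have hsx : ∑ k ∈ s, w k * c1 k * (∫ r in Ω, Complex.exp (c1 k * r.1 + c2 k * r.2)) = 0 := by
    rw [← Ix]
    exact Finset.sum_congr rfl fun k _ => (MeasureTheory.integral_const_mul _ _).symm
  have hsy : ∑ k ∈ s, w k * c2 k * (∫ r in Ω, Complex.exp (c1 k * r.1 + c2 k * r.2)) = 0 := by
    rw [← Iy]
    exact Finset.sum_congr rfl fun k _ => (MeasureTheory.integral_const_mul _ _).symm
  calc ∑ k ∈ s, w k * (a * c1 k + b * c2 k) *
        (∫ r in Ω, Complex.exp (c1 k * r.1 + c2 k * r.2))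
      = a * ∑ k ∈ s, w k * c1 k * (∫ r in Ω, Complex.exp (c1 k * r.1 + c2 k * r.2))
        + b * ∑ k ∈ s, w k * c2 k * (∫ r in Ω, Complex.exp (c1 k * r.1 + c2 k * r.2)) := by
        rw [Finset.mul_sum, Finset.mul_sum, ← Finset.sum_add_distrib]
        exact Finset.sum_congr rfl fun k _ => by ring
    _ = 0 := by rw [hsx, hsy]; ring

/-- **Annihilation property for first-order derivatives of `χ_Ω`.**
Let `f = χ_Ω` for a simply connected region `Ω ⊆ [0,1]²` with piecewise smooth boundary
contained in the zero set of a trigonometric polynomial `μ` with Fourier coefficients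
`c[k] = μ k`, `k ∈ Λ = μ.support`. Then for any first-order constant-coefficient
differential operator `D = a∂ₓ + b∂_y`, the Fourier transform of `Df` satisfies
`∑_{k∈Λ} c[k] (Df)^(ω − 2πk) = 0` for all `ω ∈ ℝ²`. -/
theorem annihilation_first_order_char
    (Ω : Set (ℝ × ℝ)) (hΩ : IsPSRegion Ω)
    (μ : AddMonoidAlgebra ℂ (ℤ × ℤ))
    (hμ : ∀ r ∈ frontier Ω, trigEval μ r = 0)
    (a b : ℂ) :
    ∀ ω : ℝ × ℝ,
      ∑ k ∈ μ.coeff.support, μ.coeff k *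
        hatDchi a b Ω (ω.1 - 2 * Real.pi * k.1, ω.2 - 2 * Real.pi * k.2) = 0 := by
  obtain ⟨hop, hsub, -⟩ := hΩ
  intro ω
  have key := annihilation_core hop hsub μ.coeff.support (fun k => -μ.coeff k)
      (fun k : ℤ × ℤ => -Complex.I * ((ω.1 - 2 * Real.pi * k.1 : ℝ) : ℂ))
      (fun k : ℤ × ℤ => -Complex.I * ((ω.2 - 2 * Real.pi * k.2 : ℝ) : ℂ)) a b ?_
  · calc ∑ k ∈ μ.coeff.support, μ.coeff k *
          hatDchi a b Ω (ω.1 - 2 * Real.pi * k.1, ω.2 - 2 * Real.pi * k.2)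
        = ∑ k ∈ μ.coeff.support, (-μ.coeff k) *
            (a * (-Complex.I * ((ω.1 - 2 * Real.pi * k.1 : ℝ) : ℂ))
              + b * (-Complex.I * ((ω.2 - 2 * Real.pi * k.2 : ℝ) : ℂ))) *
            (∫ r in Ω, Complex.exp
              ((-Complex.I * ((ω.1 - 2 * Real.pi * k.1 : ℝ) : ℂ)) * r.1
                + (-Complex.I * ((ω.2 - 2 * Real.pi * k.2 : ℝ) : ℂ)) * r.2)) := by
          refine Finset.sum_congr rfl fun k _ => ?_
          have hJ : (∫ r in Ω, Complex.exp
                (-Complex.I * (((ω.1 - 2 * Real.pi * k.1 : ℝ) : ℂ) * r.1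
                  + ((ω.2 - 2 * Real.pi * k.2 : ℝ) : ℂ) * r.2)))
              = ∫ r in Ω, Complex.exp
                ((-Complex.I * ((ω.1 - 2 * Real.pi * k.1 : ℝ) : ℂ)) * r.1
                  + (-Complex.I * ((ω.2 - 2 * Real.pi * k.2 : ℝ) : ℂ)) * r.2) := by
            congr 1 with r
            congr 1
            ring
          simp only [hatDchi]
          rw [hJ]
          ring
      _ = 0 := key
  · intro r hr
    have h := hμ r hr
    simp only [trigEval] at h
    calc ∑ k ∈ μ.coeff.support, (-μ.coeff k) * Complex.exp
          ((-Complex.I * ((ω.1 - 2 * Real.pi * k.1 : ℝ) : ℂ)) * r.1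
            + (-Complex.I * ((ω.2 - 2 * Real.pi * k.2 : ℝ) : ℂ)) * r.2)
        = ∑ k ∈ μ.coeff.support, (-Complex.exp (-Complex.I * (ω.1 * r.1 + ω.2 * r.2))) *
            (μ.coeff k * Complex.exp (2 * Real.pi * Complex.I * (k.1 * r.1 + k.2 * r.2))) := by
          refine Finset.sum_congr rfl fun k _ => ?_
          have harg : (-Complex.I * ((ω.1 - 2 * Real.pi * k.1 : ℝ) : ℂ)) * r.1
              + (-Complex.I * ((ω.2 - 2 * Real.pi * k.2 : ℝ) : ℂ)) * r.2
              = -Complex.I * (ω.1 * r.1 + ω.2 * r.2)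
                + 2 * Real.pi * Complex.I * (k.1 * r.1 + k.2 * r.2) := by
            push_cast
            ring
          rw [harg, Complex.exp_add]
          ring
      _ = 0 := by rw [← Finset.mul_sum, h, mul_zero]
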